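/- For every non-negative integer n ≥ 3, the number of orbits of n-element subsets of Z/(2n)Z under rotation by Z/(2n)Z is strictly less than the n-th Catalan number Cat(n) = C(2n,n)/(n+1). -/

import Mathlib

open Finset
section NecklaceAux
set_option linter.unusedSectionVars false
variable {N : ℕ} [NeZero N] {g : ZMod N}

private lemma neck_mem_iff_add_mem {S : Finset (ZMod N)}
    (hS : S.image (fun x => g + x) = S) (x : ZMod N) : x ∈ S ↔ g + x ∈ S := by
  constructor
  · intro hx; rw [← hS]; exact Finset.mem_image_of_mem _ hx
  · intro hx
    rw [← hS] at hx
    obtain ⟨y, hy, hxy⟩ := Finset.mem_image.mp hx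
    rwa [add_right_injective g hxy] at hy

private lemma neck_zsmul_add_mem {S : Finset (ZMod N)}
    (hS : S.image (fun x => g + x) = S) (k : ℤ) (x : ZMod N) (hx : x ∈ S) :
    k • g + x ∈ S := by
  induction k using Int.induction_on with
  | zero => simpa using hx
  | succ k ih =>
    have h2 := (neck_mem_iff_add_mem hS _).mp ih
    have he : ((k : ℤ) + 1) • g + x = g + ((k : ℤ) • g + x) := by
      rw [add_zsmul, one_zsmul]; abel
    rwa [he]
  | pred k ih =>
    refine (neck_mem_iff_add_mem hS _).mpr ?_
    have he : g + ((-(k : ℤ) - 1) • g + x) = (-(k : ℤ)) • g + x := by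
      rw [sub_zsmul, one_zsmul]; abel
    rwa [he]

private lemma neck_mem_of_rel {S : Finset (ZMod N)}
    (hS : S.image (fun x => g + x) = S) {x y : ZMod N} (hx : x ∈ S)
    (hxy : y - x ∈ AddSubgroup.zmultiples g) : y ∈ S := by
  obtain ⟨k, hk⟩ := AddSubgroup.mem_zmultiples_iff.mp hxy
  have he : y = k • g + x := by rw [hk]; abel
  rw [he]
  exact neck_zsmul_add_mem hS k x hx





private lemma neck_card_fiber (q : ZMod N ⧸ AddSubgroup.zmultiples g) :
    Nat.card {x : ZMod N // (QuotientAddGroup.mk x : ZMod N ⧸ AddSubgroup.zmultiples g) = q}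
      = addOrderOf g := by
  induction q using QuotientAddGroup.induction_on with
  | H x₀ =>
    rw [← Nat.card_zmultiples g]
    apply Nat.card_congr
    refine
      { toFun := fun x => ⟨x.1 - x₀, ?_⟩
        invFun := fun h => ⟨h.1 + x₀, ?_⟩
        left_inv := fun x => Subtype.ext (by simp)
        right_inv := fun h => Subtype.ext (by simp) }
    · have h1 : -x.1 + x₀ ∈ AddSubgroup.zmultiples g := QuotientAddGroup.eq.mp x.2
      have h2 : x.1 - x₀ = -(-x.1 + x₀) := by abel
      rw [h2]
      exact neg_mem h1
    · refine QuotientAddGroup.eq.mpr ?_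
      have h2 : -(h.1 + x₀) + x₀ = -h.1 := by abel
      rw [h2]
      exact neg_mem h.2

private lemma neck_addOrderOf_dvd_card {S : Finset (ZMod N)}
    (hS : S.image (fun x => g + x) = S) : addOrderOf g ∣ S.card := by
  classical
  rw [Finset.card_eq_sum_card_image
      (fun x : ZMod N => (QuotientAddGroup.mk x : ZMod N ⧸ AddSubgroup.zmultiples g)) S]
  refine Finset.dvd_sum fun q hq => ?_
  obtain ⟨x₀, hx₀, rfl⟩ := Finset.mem_image.mp hq
  have hfib : S.filter
        (fun x => (QuotientAddGroup.mk x : ZMod N ⧸ AddSubgroup.zmultiples g)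
          = QuotientAddGroup.mk x₀)
      = univ.filter
        (fun x => (QuotientAddGroup.mk x : ZMod N ⧸ AddSubgroup.zmultiples g)
          = QuotientAddGroup.mk x₀) := by
    ext x
    simp only [mem_filter, mem_univ, true_and, and_iff_right_iff_imp]
    intro hmk
    refine neck_mem_of_rel hS hx₀ ?_
    have h1 : -x₀ + x ∈ AddSubgroup.zmultiples g := QuotientAddGroup.eq.mp hmk.symm
    have h2 : x - x₀ = -x₀ + x := by abel
    rw [h2]; exact h1
  rw [hfib]
  have hcard : (univ.filter
        (fun x => (QuotientAddGroup.mk x : ZMod N ⧸ AddSubgroup.zmultiples g)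
          = QuotientAddGroup.mk x₀)).card = addOrderOf g := by
    rw [← Fintype.card_subtype, ← Nat.card_eq_fintype_card]
    exact neck_card_fiber _
  rw [hcard]

private lemma neck_card_fixed_le (n : ℕ) :
    Nat.card {S : Finset (ZMod N) // S.card = n ∧ S.image (fun x => g + x) = S}
      ≤ 2 ^ (N / addOrderOf g) := by
  classical
  set H := AddSubgroup.zmultiples g with hH
  have hd : 0 < addOrderOf g := addOrderOf_pos g
  have hQcard : Nat.card (ZMod N ⧸ H) = N / addOrderOf g := by
    have h1 := AddSubgroup.card_eq_card_quotient_mul_card_addSubgroup H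
    rw [Nat.card_zmultiples, Nat.card_zmod] at h1
    have h2 := Nat.mul_div_cancel (Nat.card (ZMod N ⧸ H)) hd
    rw [← h1] at h2
    exact h2.symm
  have hinj : Function.Injective
      (fun S : {S : Finset (ZMod N) // S.card = n ∧ S.image (fun x => g + x) = S} =>
        S.1.image (fun x => (QuotientAddGroup.mk x : ZMod N ⧸ H))) := by
    have key : ∀ A B : Finset (ZMod N),
        A.image (fun x => (QuotientAddGroup.mk x : ZMod N ⧸ H))
          = B.image (fun x => (QuotientAddGroup.mk x : ZMod N ⧸ H)) →
        B.image (fun x => g + x) = B → ∀ x ∈ A, x ∈ B := by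
      intro A B hAB hBf x hx
      have hmk : (QuotientAddGroup.mk x : ZMod N ⧸ H) ∈
          B.image (fun x => (QuotientAddGroup.mk x : ZMod N ⧸ H)) := by
        rw [← hAB]; exact Finset.mem_image_of_mem _ hx
      obtain ⟨y, hy, hyx⟩ := Finset.mem_image.mp hmk
      refine neck_mem_of_rel hBf hy ?_
      have h1 : -y + x ∈ H := QuotientAddGroup.eq.mp hyx
      have h2 : x - y = -y + x := by abel
      rw [h2]; exact h1
    rintro ⟨A, hAn, hAf⟩ ⟨B, hBn, hBf⟩ him
    simp only at him
    refine Subtype.ext ?_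
    apply Finset.Subset.antisymm
    · exact fun x hx => key A B him hBf x hx
    · exact fun x hx => key B A him.symm hAf x hx
  calc Nat.card {S : Finset (ZMod N) // S.card = n ∧ S.image (fun x => g + x) = S}
      ≤ Nat.card (Finset (ZMod N ⧸ H)) := Nat.card_le_card_of_injective _ hinj
    _ = 2 ^ (N / addOrderOf g) := by
        haveI : Fintype (ZMod N ⧸ H) := Fintype.ofFinite _
        rw [Nat.card_eq_fintype_card, Fintype.card_finset, ← hQcard,
          Nat.card_eq_fintype_card]

end NecklaceAux

private lemma neck_arith (k : ℕ) :
    (k+5) * ((k+4) * 2^(k+3)) < (k+3) * Nat.centralBinom (k+4) := by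
  induction k with
  | zero => decide
  | succ k ih =>
    have hC : 3 * Nat.centralBinom (k+4) ≤ Nat.centralBinom (k+5) := by
      have h1 := Nat.succ_mul_centralBinom_succ (k+4)
      have h2 : (k+4+1) * (3 * Nat.centralBinom (k+4))
          ≤ (k+4+1) * Nat.centralBinom (k+4+1) := by
        rw [h1]
        calc (k+4+1) * (3 * Nat.centralBinom (k+4))
            = ((k+4+1) * 3) * Nat.centralBinom (k+4) := by ring
          _ ≤ (2 * (2*(k+4)+1)) * Nat.centralBinom (k+4) :=
              Nat.mul_le_mul_right _ (by omega)
      exact Nat.le_of_mul_le_mul_left h2 (by omega)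
    show (k+6) * ((k+5) * 2^(k+4)) < (k+4) * Nat.centralBinom (k+5)
    calc (k+6) * ((k+5) * 2^(k+4)) = 2*(k+6) * ((k+5) * 2^(k+3)) := by
          rw [pow_succ]; ring
      _ ≤ 3*(k+4) * ((k+5) * 2^(k+3)) := Nat.mul_le_mul_right _ (by omega)
      _ = 3 * ((k+5) * ((k+4) * 2^(k+3))) := by ring
      _ < 3 * ((k+3) * Nat.centralBinom (k+4)) :=
          mul_lt_mul_of_pos_left ih (by norm_num)
      _ = (k+3) * (3 * Nat.centralBinom (k+4)) := by ring
      _ ≤ (k+3) * Nat.centralBinom (k+5) := Nat.mul_le_mul_left _ hC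
      _ ≤ (k+4) * Nat.centralBinom (k+5) := Nat.mul_le_mul_right _ (by omega)

private def neckAction (N n : ℕ) : AddAction (ZMod N) {S : Finset (ZMod N) // S.card = n} where
  vadd g S := ⟨S.1.image (fun x => g + x), by
    rw [Finset.card_image_of_injective _ (add_right_injective g)]
    exact S.2⟩
  zero_vadd S := Subtype.ext (by
    show Finset.image (fun x => 0 + x) S.1 = S.1
    simp)
  add_vadd g h S := Subtype.ext (by
    show Finset.image (fun x => g + h + x) S.1
        = Finset.image (fun x => g + x) (Finset.image (fun x => h + x) S.1)
    rw [Finset.image_image]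
    congr 1
    funext x
    simp [add_assoc])

/-- The number of rotation-orbits (binary necklaces) of `n`-element subsets of `ZMod N`. -/
noncomputable def necklaceCount (N n : ℕ) : ℕ :=
  Nat.card (Quot (fun S T : {S : Finset (ZMod N) // S.card = n} =>
    ∃ g : ZMod N, S.1.image (fun x => g + x) = T.1))

theorem necklace_lt_catalan (n : ℕ) (h : 3 ≤ n) :
    necklaceCount (2 * n) n < catalan n := by
  classical
  haveI : NeZero (2 * n) := ⟨by omega⟩
  letI : AddAction (ZMod (2*n)) {S : Finset (ZMod (2*n)) // S.card = n} := neckAction (2*n) n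
  haveI : Fintype (Quotient (AddAction.orbitRel (ZMod (2*n))
      {S : Finset (ZMod (2*n)) // S.card = n})) := Fintype.ofFinite _
  -- Burnside
  have hB := AddAction.sum_card_fixedBy_eq_card_orbits_mul_card_addGroup
    (G := ZMod (2*n)) {S : Finset (ZMod (2*n)) // S.card = n}
  simp only [← Nat.card_eq_fintype_card] at hB
  rw [Nat.card_zmod] at hB
  -- identify the necklace count with the number of orbits
  have hcount : necklaceCount (2*n) n
      = Nat.card (Quotient (AddAction.orbitRel (ZMod (2*n))
          {S : Finset (ZMod (2*n)) // S.card = n})) := by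
    rw [necklaceCount]
    apply Nat.card_congr
    apply Quot.congrRight
    intro S T
    constructor
    · rintro ⟨g, hg⟩
      have hgS : g +ᵥ S = T := Subtype.ext hg
      show S ∈ AddAction.orbit (ZMod (2*n)) T
      refine AddAction.mem_orbit_iff.mpr ⟨-g, ?_⟩
      rw [← hgS, ← add_vadd]
      simp
    · intro hST
      have hST' : S ∈ AddAction.orbit (ZMod (2*n)) T := hST
      obtain ⟨g, hg⟩ := AddAction.mem_orbit_iff.mp hST'
      refine ⟨-g, ?_⟩
      show ((-g) +ᵥ S).1 = T.1
      rw [← hg, ← add_vadd]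
      simp
  -- cardinality of the set of n-subsets
  have hXcard : Nat.card {S : Finset (ZMod (2*n)) // S.card = n} = Nat.centralBinom n := by
    rw [Nat.card_eq_fintype_card, Fintype.card_subtype]
    have he : (univ.filter (fun S : Finset (ZMod (2*n)) => S.card = n))
        = Finset.powersetCard n univ := by
      ext S
      simp [Finset.mem_powersetCard, Finset.subset_univ]
    rw [he, Finset.card_powersetCard, Finset.card_univ, ZMod.card,
      Nat.centralBinom_eq_two_mul_choose]
  -- fixed points of 0 are everything
  have hfix0 : Nat.card (AddAction.fixedBy
      {S : Finset (ZMod (2*n)) // S.card = n} (0 : ZMod (2*n))) = Nat.centralBinom n := by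
    rw [← hXcard]
    exact Nat.card_congr (Equiv.subtypeUnivEquiv (fun S => zero_vadd _ S))
  -- identification of fixed points with fixed finsets
  have hfixEquiv : ∀ g : ZMod (2*n),
      (AddAction.fixedBy {S : Finset (ZMod (2*n)) // S.card = n} g) ≃
      {S : Finset (ZMod (2*n)) // S.card = n ∧ S.image (fun x => g + x) = S} := fun g =>
    { toFun := fun S => ⟨S.1.1, S.1.2, congrArg Subtype.val S.2⟩
      invFun := fun S => ⟨⟨S.1, S.2.1⟩, Subtype.ext S.2.2⟩
      left_inv := fun S => rfl
      right_inv := fun S => rfl }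
  -- elements whose order divides n have even value
  have hval2 : ∀ g : ZMod (2*n), addOrderOf g ∣ n → 2 ∣ ZMod.val g := by
    intro g hdvd
    have h1 : n • g = 0 := addOrderOf_dvd_iff_nsmul_eq_zero.mp hdvd
    have hgv : ((ZMod.val g : ℕ) : ZMod (2*n)) = g := ZMod.natCast_rightInverse g
    have h2 : ((n * ZMod.val g : ℕ) : ZMod (2*n)) = 0 := by
      rw [Nat.cast_mul, hgv, ← nsmul_eq_mul]
      exact h1
    have h3 : 2 * n ∣ n * ZMod.val g := (ZMod.natCast_eq_zero_iff _ _).mp h2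
    obtain ⟨c, hc⟩ := h3
    have h4 : ZMod.val g = 2 * c := by
      apply Nat.eq_of_mul_eq_mul_left (show 0 < n by omega)
      rw [hc]; ring
    omega
  -- the unique element of additive order 2 is n
  have horder2 : ∀ g : ZMod (2*n), addOrderOf g = 2 → g = (n : ZMod (2*n)) := by
    intro g hg
    have h1 : (2 : ℕ) • g = 0 := by
      have h1' := addOrderOf_nsmul_eq_zero g
      rw [hg] at h1'
      exact h1'
    have hgv : ((ZMod.val g : ℕ) : ZMod (2*n)) = g := ZMod.natCast_rightInverse g
    have h2 : ((2 * ZMod.val g : ℕ) : ZMod (2*n)) = 0 := by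
      have he : (2 * ZMod.val g : ℕ) = ZMod.val g + ZMod.val g := by omega
      rw [he, Nat.cast_add, hgv, ← two_nsmul]
      exact h1
    have h3 : 2 * n ∣ 2 * ZMod.val g := (ZMod.natCast_eq_zero_iff _ _).mp h2
    have h4 : n ∣ ZMod.val g := by
      obtain ⟨c, hc⟩ := h3
      have he2 : 2 * (n * c) = 2 * n * c := by ring
      exact ⟨c, by omega⟩
    have h5 : ZMod.val g < 2 * n := ZMod.val_lt g
    have h6 : ZMod.val g ≠ 0 := by
      intro h0
      have hzz : g = 0 := (ZMod.val_eq_zero g).mp h0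
      rw [hzz, addOrderOf_zero] at hg
      omega
    have h7 : ZMod.val g = n := by
      obtain ⟨c, hc⟩ := h4
      rcases Nat.lt_or_ge c 2 with hc2 | hc2
      · interval_cases c
        · simp only [Nat.mul_zero] at hc; omega
        · simp only [Nat.mul_one] at hc; omega
      · exfalso
        have : n * 2 ≤ n * c := Nat.mul_le_mul_left n hc2
        omega
    have h8 := congrArg (fun t : ℕ => (t : ZMod (2*n))) h7
    exact hgv.symm.trans h8
  -- the set of nonzero elements with order dividing n
  set T : Finset (ZMod (2*n)) :=
    univ.filter (fun g : ZMod (2*n) => g ≠ 0 ∧ addOrderOf g ∣ n) with hT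
  have hTcard : T.card ≤ n - 1 := by
    have hmaps : ∀ g ∈ T, ZMod.val g / 2 ∈ Finset.Ico 1 n := by
      intro g hg
      rw [hT, mem_filter] at hg
      obtain ⟨-, hne, hdvd⟩ := hg
      have h2 := hval2 g hdvd
      have h5 : ZMod.val g < 2 * n := ZMod.val_lt g
      have h6 : ZMod.val g ≠ 0 := fun h0 => hne ((ZMod.val_eq_zero g).mp h0)
      rw [Finset.mem_Ico]
      omega
    have hinj : ∀ g₁ ∈ T, ∀ g₂ ∈ T, ZMod.val g₁ / 2 = ZMod.val g₂ / 2 → g₁ = g₂ := by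
      intro g₁ h₁ g₂ h₂ hval
      rw [hT, mem_filter] at h₁ h₂
      have e₁ := hval2 g₁ h₁.2.2
      have e₂ := hval2 g₂ h₂.2.2
      have he : ZMod.val g₁ = ZMod.val g₂ := by omega
      exact ZMod.val_injective _ he
    calc T.card ≤ (Finset.Ico 1 n).card :=
          Finset.card_le_card_of_injOn _ hmaps hinj
      _ = n - 1 := by rw [Nat.card_Ico]
  -- if n is odd, n is not in T
  have hnmem : ¬ (2 ∣ n) → (n : ZMod (2*n)) ∉ T := by
    intro hodd hmem
    rw [hT, mem_filter] at hmem
    obtain ⟨-, hne, hdvd⟩ := hmem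
    have h2 := hval2 _ hdvd
    rw [ZMod.val_cast_of_lt (by omega)] at h2
    exact hodd h2
  -- bound for each fixed-point set
  have hbound : ∀ g ∈ T, Nat.card (AddAction.fixedBy
      {S : Finset (ZMod (2*n)) // S.card = n} g) ≤
      (if g = (n : ZMod (2*n)) then 2^n else 2^(n-1)) := by
    intro g hgT
    rw [hT, mem_filter] at hgT
    obtain ⟨-, hg0, hdvd⟩ := hgT
    rw [Nat.card_congr (hfixEquiv g)]
    have hle := neck_card_fixed_le (N := 2*n) (g := g) n
    have hd1 : addOrderOf g ≠ 1 := fun h1 => hg0 (AddMonoid.addOrderOf_eq_one_iff.mp h1)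
    have hd0 : 0 < addOrderOf g := addOrderOf_pos g
    by_cases hgn : g = (n : ZMod (2*n))
    · rw [if_pos hgn]
      refine hle.trans (Nat.pow_le_pow_right (by omega) ?_)
      have hq : 2*n / addOrderOf g ≤ 2*n / 2 :=
        Nat.div_le_div_left (show 2 ≤ addOrderOf g by omega) (by omega)
      omega
    · rw [if_neg hgn]
      have hd3 : 3 ≤ addOrderOf g := by
        rcases Nat.lt_or_ge (addOrderOf g) 3 with hlt | hge
        · exfalso
          have h2 : addOrderOf g = 2 := by omega
          exact hgn (horder2 g h2)
        · exact hge
      refine hle.trans (Nat.pow_le_pow_right (by omega) ?_)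
      have hq : 2*n / addOrderOf g ≤ 2*n / 3 := Nat.div_le_div_left hd3 (by omega)
      omega
  -- fixed-point sets vanish off T
  have hzero : ∀ g ∈ (univ.erase (0 : ZMod (2*n))), g ∉ T → Nat.card (AddAction.fixedBy
      {S : Finset (ZMod (2*n)) // S.card = n} g) = 0 := by
    intro g hge hgT
    have hg0 : g ≠ 0 := (Finset.mem_erase.mp hge).1
    have hndvd : ¬ addOrderOf g ∣ n := by
      intro hdvd
      exact hgT (by rw [hT, mem_filter]; exact ⟨mem_univ g, hg0, hdvd⟩)
    rw [Nat.card_congr (hfixEquiv g), Nat.card_eq_zero]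
    left
    refine ⟨fun S => ?_⟩
    have hdvd := neck_addOrderOf_dvd_card S.2.2
    rw [S.2.1] at hdvd
    exact hndvd hdvd
  -- assemble the sum
  have hsum1 : ∑ g : ZMod (2*n), Nat.card (AddAction.fixedBy
      {S : Finset (ZMod (2*n)) // S.card = n} g)
      = Nat.centralBinom n + ∑ g ∈ univ.erase (0 : ZMod (2*n)), Nat.card (AddAction.fixedBy
        {S : Finset (ZMod (2*n)) // S.card = n} g) := by
    rw [← Finset.add_sum_erase univ _ (mem_univ (0 : ZMod (2*n))), hfix0]
  have hsum2 : ∑ g ∈ univ.erase (0 : ZMod (2*n)), Nat.card (AddAction.fixedBy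
      {S : Finset (ZMod (2*n)) // S.card = n} g)
      = ∑ g ∈ T, Nat.card (AddAction.fixedBy
        {S : Finset (ZMod (2*n)) // S.card = n} g) := by
    refine (Finset.sum_subset ?_ hzero).symm
    intro g hg
    rw [hT, mem_filter] at hg
    exact Finset.mem_erase.mpr ⟨hg.2.1, mem_univ g⟩
  have hsum3 : ∑ g ∈ T, Nat.card (AddAction.fixedBy
      {S : Finset (ZMod (2*n)) // S.card = n} g)
      ≤ T.card * 2^(n-1) + (if (n : ZMod (2*n)) ∈ T then 2^(n-1) else 0) := by
    calc ∑ g ∈ T, Nat.card (AddAction.fixedBy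
        {S : Finset (ZMod (2*n)) // S.card = n} g)
        ≤ ∑ g ∈ T, (if g = (n : ZMod (2*n)) then 2^n else 2^(n-1)) :=
          Finset.sum_le_sum hbound
      _ = ∑ g ∈ T, (2^(n-1) + (if g = (n : ZMod (2*n)) then 2^(n-1) else 0)) := by
          refine Finset.sum_congr rfl fun g _ => ?_
          by_cases hgn : g = (n : ZMod (2*n))
          · rw [if_pos hgn, if_pos hgn]
            have h1 : n - 1 + 1 = n := by omega
            have h2 : 2^(n-1) * 2 = 2^n := by rw [← pow_succ, h1]
            omega
          · rw [if_neg hgn, if_neg hgn, Nat.add_zero]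
      _ = T.card * 2^(n-1) + ∑ g ∈ T, (if g = (n : ZMod (2*n)) then 2^(n-1) else 0) := by
          rw [Finset.sum_add_distrib, Finset.sum_const, smul_eq_mul]
      _ = T.card * 2^(n-1) + (if (n : ZMod (2*n)) ∈ T then 2^(n-1) else 0) := by
          rw [Finset.sum_ite_eq' T (n : ZMod (2*n)) (fun _ => 2^(n-1))]
  -- key inequality on the tail sum
  have hS' : (n+1) * (∑ g ∈ T, Nat.card (AddAction.fixedBy
      {S : Finset (ZMod (2*n)) // S.card = n} g)) < (n-1) * Nat.centralBinom n := by
    rcases Nat.lt_or_ge n 4 with h4 | h4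
    · have hn3 : n = 3 := by omega
      subst hn3
      have hnotmem := hnmem (by omega)
      rw [if_neg hnotmem] at hsum3
      have hcb : Nat.centralBinom 3 = 20 := by decide
      rw [hcb]
      norm_num at hsum3 ⊢
      omega
    · have hkey : (n+1) * (n * 2^(n-1)) < (n-1) * Nat.centralBinom n := by
        obtain ⟨k, rfl⟩ : ∃ k, n = k + 4 := ⟨n - 4, by omega⟩
        have har := neck_arith k
        have e1 : k + 4 - 1 = k + 3 := by omega
        rw [e1]
        exact har
      have hSig : ∑ g ∈ T, Nat.card (AddAction.fixedBy
          {S : Finset (ZMod (2*n)) // S.card = n} g) ≤ n * 2^(n-1) := by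
        have h1 : (if (n : ZMod (2*n)) ∈ T then 2^(n-1) else 0) ≤ 2^(n-1) := by
          split
          · exact le_refl _
          · exact Nat.zero_le _
        have h2 : T.card * 2^(n-1) ≤ (n-1) * 2^(n-1) :=
          Nat.mul_le_mul_right _ hTcard
        have h3 : (n-1) * 2^(n-1) + 2^(n-1) = n * 2^(n-1) := by
          have h5 : n - 1 + 1 = n := by omega
          calc (n-1) * 2^(n-1) + 2^(n-1) = (n-1+1) * 2^(n-1) := by ring
            _ = n * 2^(n-1) := by rw [h5]
        omega
      calc (n+1) * (∑ g ∈ T, Nat.card (AddAction.fixedBy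
          {S : Finset (ZMod (2*n)) // S.card = n} g))
          ≤ (n+1) * (n * 2^(n-1)) := Nat.mul_le_mul_left _ hSig
        _ < (n-1) * Nat.centralBinom n := hkey
  -- finish
  have hsum_eq : Nat.card (Quotient (AddAction.orbitRel (ZMod (2*n))
      {S : Finset (ZMod (2*n)) // S.card = n})) * (2*n)
      = Nat.centralBinom n + ∑ g ∈ T, Nat.card (AddAction.fixedBy
        {S : Finset (ZMod (2*n)) // S.card = n} g) := by
    rw [← hB, hsum1, hsum2]
  have hlt : (n+1) * (Nat.card (Quotient (AddAction.orbitRel (ZMod (2*n))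
      {S : Finset (ZMod (2*n)) // S.card = n})) * (2*n)) < (2*n) * Nat.centralBinom n := by
    rw [hsum_eq]
    calc (n+1) * (Nat.centralBinom n + ∑ g ∈ T, Nat.card (AddAction.fixedBy
        {S : Finset (ZMod (2*n)) // S.card = n} g))
        = (n+1) * Nat.centralBinom n + (n+1) * ∑ g ∈ T, Nat.card (AddAction.fixedBy
          {S : Finset (ZMod (2*n)) // S.card = n} g) := by ring
      _ < (n+1) * Nat.centralBinom n + (n-1) * Nat.centralBinom n :=
          Nat.add_lt_add_left hS' _
      _ = ((n+1) + (n-1)) * Nat.centralBinom n := (Nat.add_mul _ _ _).symm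
      _ = (2*n) * Nat.centralBinom n := by
          have : (n+1) + (n-1) = 2*n := by omega
          rw [this]
  have hcat := succ_mul_catalan_eq_centralBinom n
  have hlt2 : (2*n*(n+1)) * Nat.card (Quotient (AddAction.orbitRel (ZMod (2*n))
      {S : Finset (ZMod (2*n)) // S.card = n})) < (2*n*(n+1)) * catalan n := by
    calc (2*n*(n+1)) * Nat.card (Quotient (AddAction.orbitRel (ZMod (2*n))
        {S : Finset (ZMod (2*n)) // S.card = n}))
        = (n+1) * (Nat.card (Quotient (AddAction.orbitRel (ZMod (2*n))
          {S : Finset (ZMod (2*n)) // S.card = n})) * (2*n)) := by ring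
      _ < (2*n) * Nat.centralBinom n := hlt
      _ = (2*n) * ((n+1) * catalan n) := by rw [hcat]
      _ = (2*n*(n+1)) * catalan n := by ring
  rw [hcount]
  exact Nat.lt_of_mul_lt_mul_left hlt2
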